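/- Fix a > 0 and define u : R^2\{0} -> R by u(x) = 2(|x|^2/a^2 - 1) + (|x|/a - a/|x|) x_1/|x|. Then Delta u = 8/a^2 everywhere on R^2\{0}, and u = 0 on the circle {|x| = a}. Consequently the field v = ∇^⊥u satisfies div v = 0, is tangential to the circle {|x| = a}, and solves the steady Euler equations with pressure p = -|v|^2/2 + (8/a^2) u on {x : |x| ≥ a}. -/

import Mathlib

noncomputable def pd1 (f : ℝ × ℝ → ℝ) (x : ℝ × ℝ) : ℝ := fderiv ℝ f x (1, 0)
noncomputable def pd2 (f : ℝ × ℝ → ℝ) (x : ℝ × ℝ) : ℝ := fderiv ℝ f x (0, 1)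
noncomputable def rad (x : ℝ × ℝ) : ℝ := Real.sqrt (x.1 ^ 2 + x.2 ^ 2)

noncomputable def lmap (p q : ℝ) : ℝ × ℝ →L[ℝ] ℝ :=
  p • ContinuousLinearMap.fst ℝ ℝ ℝ + q • ContinuousLinearMap.snd ℝ ℝ ℝ

lemma lmap_apply (p q : ℝ) (v : ℝ × ℝ) : lmap p q v = p * v.1 + q * v.2 := by
  simp [lmap]

lemma pd_of {f : ℝ × ℝ → ℝ} {x : ℝ × ℝ} {d1 d2 : ℝ}
    (h : HasFDerivAt f (lmap d1 d2) x) : pd1 f x = d1 ∧ pd2 f x = d2 := by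
  constructor <;> simp [pd1, pd2, h.fderiv, lmap_apply]

lemma conv' {f : ℝ × ℝ → ℝ} {x : ℝ × ℝ} {L : ℝ × ℝ →L[ℝ] ℝ}
    (h : HasFDerivAt f L x) {d1 d2 : ℝ}
    (h1 : L (1, 0) = d1) (h2 : L (0, 1) = d2) : HasFDerivAt f (lmap d1 d2) x := by
  have hL : L = lmap d1 d2 := by
    apply ContinuousLinearMap.ext
    intro v
    have hv : (v : ℝ × ℝ) = v.1 • ((1:ℝ), (0:ℝ)) + v.2 • ((0:ℝ), (1:ℝ)) := by
      ext <;> simp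
    rw [lmap_apply, hv, map_add, map_smul, map_smul, h1, h2, smul_eq_mul, smul_eq_mul]
    simp
    ring
  exact hL ▸ h

noncomputable def Sf : ℝ × ℝ → ℝ := fun y => y.1 ^ 2 + y.2 ^ 2
noncomputable def Uf (a : ℝ) : ℝ × ℝ → ℝ :=
  fun y => 2 * Sf y / a ^ 2 - 2 + y.1 / a - a * y.1 / Sf y
noncomputable def D1f (a : ℝ) : ℝ × ℝ → ℝ :=
  fun y => 4 * y.1 / a ^ 2 + 1 / a - a * (y.2 ^ 2 - y.1 ^ 2) / (Sf y) ^ 2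
noncomputable def D2f (a : ℝ) : ℝ × ℝ → ℝ :=
  fun y => 4 * y.2 / a ^ 2 + 2 * a * y.1 * y.2 / (Sf y) ^ 2
noncomputable def Pf (a : ℝ) : ℝ × ℝ → ℝ :=
  fun y => -((D2f a y) ^ 2 + (D1f a y) ^ 2) / 2 + 8 / a ^ 2 * Uf a y

lemma hasS (x : ℝ × ℝ) : HasFDerivAt Sf (lmap (2 * x.1) (2 * x.2)) x := by
  have e : Sf = fun y : ℝ × ℝ => y.1 * y.1 + y.2 * y.2 := by funext y; simp [Sf]; ring
  rw [e]
  refine conv' ((hasFDerivAt_fst.mul hasFDerivAt_fst).add (hasFDerivAt_snd.mul hasFDerivAt_snd)) ?_ ?_ <;>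
    · simp
      ring

lemma hasInv {x : ℝ × ℝ} (hs : Sf x ≠ 0) :
    HasFDerivAt (fun y => (Sf y)⁻¹) (lmap (-2 * x.1 / Sf x ^ 2) (-2 * x.2 / Sf x ^ 2)) x := by
  have h := (hasDerivAt_inv hs).comp_hasFDerivAt x (hasS x)
  refine conv' h ?_ ?_ <;>
    · simp [lmap_apply]
      field_simp
      try ring

lemma hasU {a : ℝ} (ha : a ≠ 0) {x : ℝ × ℝ} (hs : Sf x ≠ 0) :
    HasFDerivAt (Uf a) (lmap (D1f a x) (D2f a x)) x := by
  have e : Uf a = fun y : ℝ × ℝ =>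
      2 / a ^ 2 * Sf y - 2 + 1 / a * y.1 - a * y.1 * (Sf y)⁻¹ := by
    funext y; simp only [Uf]; ring
  rw [e]
  have h := (((((hasS x).const_mul (2 / a ^ 2)).sub_const 2).add
      (hasFDerivAt_fst.const_mul (1 / a))).sub
      ((hasFDerivAt_fst.const_mul a).mul (hasInv hs)))
  have hs' : x.1 ^ 2 + x.2 ^ 2 ≠ 0 := hs
  refine conv' h ?_ ?_ <;>
    · simp [lmap_apply, D1f, D2f, Sf]
      field_simp
      ring

noncomputable def E11f (a : ℝ) (x : ℝ × ℝ) : ℝ :=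
  4 / a ^ 2 + 2 * a * x.1 * (3 * x.2 ^ 2 - x.1 ^ 2) / Sf x ^ 3
noncomputable def E12f (a : ℝ) (x : ℝ × ℝ) : ℝ :=
  -2 * a * x.2 * (3 * x.1 ^ 2 - x.2 ^ 2) / Sf x ^ 3
noncomputable def E21f (a : ℝ) (x : ℝ × ℝ) : ℝ :=
  2 * a * x.2 / Sf x ^ 2 - 8 * a * x.1 ^ 2 * x.2 / Sf x ^ 3
noncomputable def E22f (a : ℝ) (x : ℝ × ℝ) : ℝ :=
  4 / a ^ 2 + 2 * a * x.1 / Sf x ^ 2 - 8 * a * x.1 * x.2 ^ 2 / Sf x ^ 3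

lemma hasD1 {a : ℝ} (ha : a ≠ 0) {x : ℝ × ℝ} (hs : Sf x ≠ 0) :
    HasFDerivAt (D1f a) (lmap (E11f a x) (E12f a x)) x := by
  have e : D1f a = fun y : ℝ × ℝ =>
      4 / a ^ 2 * y.1 + 1 / a - a * (y.2 * y.2 - y.1 * y.1) * ((Sf y)⁻¹ * (Sf y)⁻¹) := by
    funext y; simp only [D1f]; ring
  rw [e]
  have h := (((hasFDerivAt_fst.const_mul (4 / a ^ 2)).add_const (1 / a)).sub
      ((((hasFDerivAt_snd.mul hasFDerivAt_snd).sub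
        (hasFDerivAt_fst.mul hasFDerivAt_fst)).const_mul a).mul
        ((hasInv hs).mul (hasInv hs))))
  have hs' : x.1 ^ 2 + x.2 ^ 2 ≠ 0 := hs
  refine conv' h ?_ ?_ <;>
    · simp [lmap_apply, E11f, E12f, Sf]
      field_simp
      ring

lemma hasD2 {a : ℝ} (ha : a ≠ 0) {x : ℝ × ℝ} (hs : Sf x ≠ 0) :
    HasFDerivAt (D2f a) (lmap (E21f a x) (E22f a x)) x := by
  have e : D2f a = fun y : ℝ × ℝ =>
      4 / a ^ 2 * y.2 + 2 * a * (y.1 * y.2) * ((Sf y)⁻¹ * (Sf y)⁻¹) := by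
    funext y; simp only [D2f]; ring
  rw [e]
  have h := ((hasFDerivAt_snd.const_mul (4 / a ^ 2)).add
      (((hasFDerivAt_fst.mul hasFDerivAt_snd).const_mul (2 * a)).mul
        ((hasInv hs).mul (hasInv hs))))
  have hs' : x.1 ^ 2 + x.2 ^ 2 ≠ 0 := hs
  refine conv' h ?_ ?_ <;>
    · simp [lmap_apply, E21f, E22f, Sf]
      field_simp
      ring

lemma hasP {a : ℝ} (ha : a ≠ 0) {x : ℝ × ℝ} (hs : Sf x ≠ 0) :
    HasFDerivAt (Pf a)
      (lmap (-(D2f a x * E21f a x + D1f a x * E11f a x) + 8 / a ^ 2 * D1f a x)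
            (-(D2f a x * E22f a x + D1f a x * E12f a x) + 8 / a ^ 2 * D2f a x)) x := by
  have e : Pf a = fun y : ℝ × ℝ =>
      -(1 / 2) * (D2f a y * D2f a y + D1f a y * D1f a y) + 8 / a ^ 2 * Uf a y := by
    funext y; simp only [Pf]; ring
  rw [e]
  have h := (((((hasD2 ha hs).mul (hasD2 ha hs)).add
      ((hasD1 ha hs).mul (hasD1 ha hs))).const_mul (-(1 / 2))).add
      ((hasU ha hs).const_mul (8 / a ^ 2)))
  refine conv' h ?_ ?_ <;>
    · simp [lmap_apply]
      ring

lemma hlap {a : ℝ} (ha : a ≠ 0) {x : ℝ × ℝ} (hs : Sf x ≠ 0) :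
    E11f a x + E22f a x = 8 / a ^ 2 := by
  have hs' : x.1 ^ 2 + x.2 ^ 2 ≠ 0 := hs
  simp only [E11f, E22f, Sf]
  field_simp
  ring

lemma hdiv {a : ℝ} {x : ℝ × ℝ} (hs : Sf x ≠ 0) :
    -(E21f a x) + E12f a x = 0 := by
  have hs' : x.1 ^ 2 + x.2 ^ 2 ≠ 0 := hs
  simp only [E21f, E12f, Sf]
  field_simp
  ring

lemma Sf_ne {x : ℝ × ℝ} (hx : x ≠ 0) : Sf x ≠ 0 := by
  have h1 : x.1 ≠ 0 ∨ x.2 ≠ 0 := by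
    by_contra h
    push_neg at h
    exact hx (Prod.ext h.1 h.2)
  have : (0:ℝ) < x.1 ^ 2 + x.2 ^ 2 := by
    rcases h1 with h | h
    · positivity
    · positivity
  exact ne_of_gt this

/-- For `a > 0` and `u(x) = 2(|x|²/a² - 1) + (|x|/a - a/|x|) x₁/|x|`, one has `Δu = 8/a²`
on `ℝ²\{0}`, `u = 0` on `{|x| = a}`, and `v = ∇^⊥u` is divergence free, tangential to
`{|x| = a}`, and solves the steady Euler equations with `p = -|v|²/2 + (8/a²)u` on `{|x| ≥ a}`. -/
theorem stmt6 (a : ℝ) (ha : 0 < a) (u : ℝ × ℝ → ℝ)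
    (hu : ∀ x, u x = 2 * ((rad x) ^ 2 / a ^ 2 - 1) + (rad x / a - a / rad x) * (x.1 / rad x))
    (v1 v2 p : ℝ × ℝ → ℝ)
    (hv1 : ∀ x, v1 x = -(pd2 u x)) (hv2 : ∀ x, v2 x = pd1 u x)
    (hp : ∀ x, p x = -((v1 x) ^ 2 + (v2 x) ^ 2) / 2 + (8 / a ^ 2) * u x) :
    (∀ x : ℝ × ℝ, x ≠ 0 → pd1 (pd1 u) x + pd2 (pd2 u) x = 8 / a ^ 2) ∧
    (∀ x : ℝ × ℝ, rad x = a → u x = 0) ∧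
    (∀ x : ℝ × ℝ, x ≠ 0 → pd1 v1 x + pd2 v2 x = 0) ∧
    (∀ x : ℝ × ℝ, rad x = a → v1 x * x.1 + v2 x * x.2 = 0) ∧
    (∀ x : ℝ × ℝ, a ≤ rad x →
      v1 x * pd1 v1 x + v2 x * pd2 v1 x + pd1 p x = 0 ∧
      v1 x * pd1 v2 x + v2 x * pd2 v2 x + pd2 p x = 0) := by
  have ha' : a ≠ 0 := ne_of_gt ha
  have hueq : u = Uf a := by
    funext y
    rw [hu]
    rcases eq_or_ne y 0 with rfl | hy
    · simp [rad, Uf, Sf]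
    · have hsy : Sf y ≠ 0 := Sf_ne hy
      have hsy' : (0:ℝ) < y.1 ^ 2 + y.2 ^ 2 := lt_of_le_of_ne (by positivity) (Ne.symm hsy)
      have hr2 : rad y ^ 2 = y.1 ^ 2 + y.2 ^ 2 := Real.sq_sqrt hsy'.le
      have hrpos : 0 < rad y := Real.sqrt_pos.mpr hsy'
      have hrne : rad y ≠ 0 := ne_of_gt hrpos
      simp only [Uf, Sf, ← hr2]
      field_simp
      ring
  have hScont : Continuous Sf := by unfold Sf; fun_prop
  have hopen : IsOpen {y : ℝ × ℝ | Sf y ≠ 0} := isOpen_compl_singleton.preimage hScont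
  have key : ∀ x : ℝ × ℝ, Sf x ≠ 0 → pd1 u x = D1f a x ∧ pd2 u x = D2f a x := by
    intro x hs
    rw [hueq]
    exact pd_of (hasU ha' hs)
  have hev : ∀ x : ℝ × ℝ, Sf x ≠ 0 → ∀ᶠ y in nhds x, Sf y ≠ 0 :=
    fun x hs => hopen.eventually_mem hs
  have hv1ev : ∀ x : ℝ × ℝ, Sf x ≠ 0 → v1 =ᶠ[nhds x] fun y => -(D2f a y) :=
    fun x hs => (hev x hs).mono fun y hy => by rw [hv1 y, (key y hy).2]
  have hv2ev : ∀ x : ℝ × ℝ, Sf x ≠ 0 → v2 =ᶠ[nhds x] D1f a :=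
    fun x hs => (hev x hs).mono fun y hy => by rw [hv2 y, (key y hy).1]
  have hpev : ∀ x : ℝ × ℝ, Sf x ≠ 0 → p =ᶠ[nhds x] Pf a := by
    intro x hs
    refine (hev x hs).mono fun y hy => ?_
    rw [hp y, hv1 y, hv2 y, (key y hy).1, (key y hy).2, hueq]
    simp only [Pf]
    ring
  have hpd1u : ∀ x : ℝ × ℝ, Sf x ≠ 0 → pd1 u =ᶠ[nhds x] D1f a :=
    fun x hs => (hev x hs).mono fun y hy => (key y hy).1
  have hpd2u : ∀ x : ℝ × ℝ, Sf x ≠ 0 → pd2 u =ᶠ[nhds x] D2f a :=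
    fun x hs => (hev x hs).mono fun y hy => (key y hy).2
  have h2nd : ∀ x : ℝ × ℝ, Sf x ≠ 0 →
      pd1 (pd1 u) x = E11f a x ∧ pd2 (pd2 u) x = E22f a x := by
    intro x hs
    constructor
    · show fderiv ℝ (pd1 u) x (1, 0) = _
      rw [(hpd1u x hs).fderiv_eq]
      exact (pd_of (hasD1 ha' hs)).1
    · show fderiv ℝ (pd2 u) x (0, 1) = _
      rw [(hpd2u x hs).fderiv_eq]
      exact (pd_of (hasD2 ha' hs)).2
  have hv1d : ∀ x : ℝ × ℝ, Sf x ≠ 0 →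
      pd1 v1 x = -(E21f a x) ∧ pd2 v1 x = -(E22f a x) := by
    intro x hs
    have hneg : HasFDerivAt (fun y => -(D2f a y)) (lmap (-(E21f a x)) (-(E22f a x))) x :=
      conv' (hasD2 ha' hs).neg (by simp [lmap_apply]) (by simp [lmap_apply])
    constructor
    · show fderiv ℝ v1 x (1, 0) = _
      rw [(hv1ev x hs).fderiv_eq]
      exact (pd_of hneg).1
    · show fderiv ℝ v1 x (0, 1) = _
      rw [(hv1ev x hs).fderiv_eq]
      exact (pd_of hneg).2
  have hv2d : ∀ x : ℝ × ℝ, Sf x ≠ 0 →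
      pd1 v2 x = E11f a x ∧ pd2 v2 x = E12f a x := by
    intro x hs
    constructor
    · show fderiv ℝ v2 x (1, 0) = _
      rw [(hv2ev x hs).fderiv_eq]
      exact (pd_of (hasD1 ha' hs)).1
    · show fderiv ℝ v2 x (0, 1) = _
      rw [(hv2ev x hs).fderiv_eq]
      exact (pd_of (hasD1 ha' hs)).2
  have hpd : ∀ x : ℝ × ℝ, Sf x ≠ 0 →
      pd1 p x = -(D2f a x * E21f a x + D1f a x * E11f a x) + 8 / a ^ 2 * D1f a x ∧
      pd2 p x = -(D2f a x * E22f a x + D1f a x * E12f a x) + 8 / a ^ 2 * D2f a x := by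
    intro x hs
    constructor
    · show fderiv ℝ p x (1, 0) = _
      rw [(hpev x hs).fderiv_eq]
      exact (pd_of (hasP ha' hs)).1
    · show fderiv ℝ p x (0, 1) = _
      rw [(hpev x hs).fderiv_eq]
      exact (pd_of (hasP ha' hs)).2
  refine ⟨?_, ?_, ?_, ?_, ?_⟩
  · intro x hx
    have hs := Sf_ne hx
    rw [(h2nd x hs).1, (h2nd x hs).2]
    exact hlap ha' hs
  · intro x hx
    rw [hu, hx]
    field_simp
    ring
  · intro x hx
    have hs := Sf_ne hx
    rw [(hv1d x hs).1, (hv2d x hs).2]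
    exact hdiv hs
  · intro x hx
    have hx0 : x ≠ 0 := by
      intro h
      rw [h] at hx
      simp [rad] at hx
      exact ha' hx.symm
    have hs := Sf_ne hx0
    have hS : Sf x = a ^ 2 := by
      have h2 : rad x ^ 2 = Sf x := Real.sq_sqrt (by positivity)
      rw [← h2, hx]
    rw [hv1 x, hv2 x, (key x hs).1, (key x hs).2]
    simp only [D1f, D2f]
    rw [hS]
    have hSx : x.1 ^ 2 + x.2 ^ 2 = a ^ 2 := hS
    field_simp
    linear_combination (-x.2) * hSx
  · intro x hx
    have hrpos : 0 < rad x := lt_of_lt_of_le ha hx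
    have hs : Sf x ≠ 0 := ne_of_gt (Real.sqrt_pos.mp hrpos)
    constructor
    · rw [hv1 x, hv2 x, (key x hs).1, (key x hs).2, (hv1d x hs).1, (hv1d x hs).2,
        (hpd x hs).1]
      linear_combination (-(D1f a x)) * hlap ha' hs
    · rw [hv1 x, hv2 x, (key x hs).1, (key x hs).2, (hv2d x hs).1, (hv2d x hs).2,
        (hpd x hs).2]
      linear_combination (-(D2f a x)) * hlap ha' hs
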